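/- Let d ≥ 1 and F ≥ 0 be integers, let ι be a finite index set with |ι| ≥ (d+1)F + 1, let x : ι → ℝ^d, and let p ∈ {1, …, d}; write x_j(p) for the p-th coordinate of x_j. Let Y ⊆ ι with |Y| = (d+1)F + 1 be such that x_a(p) ≤ x_b(p) for all a ∈ Y and b ∈ ι \ Y, and let Z ⊆ ι with |Z| = (d+1)F + 1 be such that x_a(p) ≥ x_b(p) for all a ∈ Z and b ∈ ι \ Z. If c ∈ ℝ is such that at least dF + 1 indices j ∈ ι satisfy x_j(p) ≤ c, then every y ∈ Ψ(x restricted to Y, F) satisfies y(p) ≤ c; and if C ∈ ℝ is such that at least dF + 1 indices j ∈ ι satisfy x_j(p) ≥ C, then every z ∈ Ψ(x restricted to Z, F) satisfies z(p) ≥ C. -/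

import Mathlib

/-- `Psi x n` is the intersection, over all subsets `S` of the (finite) index set
with `|S| = m - n` (where `m` is the cardinality of the index set), of the convex
hull of the points indexed by `S`. -/
def Psi {d : ℕ} {ι : Type*} [Fintype ι] (x : ι → (Fin d → ℝ)) (n : ℕ) :
    Set (Fin d → ℝ) :=
  ⋂ S ∈ {S : Finset ι | S.card = Fintype.card ι - n},
    convexHull ℝ (x '' (S : Set ι))

open scoped Classical in
lemma psi_aux {d F : ℕ} {ι : Type*} [Fintype ι] [DecidableEq ι]
    (x : ι → (Fin d → ℝ)) (W : Finset ι) (hW : W.card = (d + 1) * F + 1)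
    (P : (Fin d → ℝ) → Prop)
    (hP : Convex ℝ {v | P v})
    (hfilter : d * F + 1 ≤ (W.filter (fun j => P (x j))).card) :
    ∀ y ∈ Psi (fun j : W => x j) F, P y := by
  intro y hy
  obtain ⟨T, hTsub, hTcard⟩ := Finset.exists_subset_card_eq hfilter
  set S : Finset ↥W := T.subtype (· ∈ W) with hS
  have hScard : S.card = d * F + 1 := by
    rw [hS, Finset.card_subtype, Finset.filter_true_of_mem, hTcard]
    intro j hj
    exact Finset.mem_of_mem_filter j (hTsub hj)
  have hmem := Set.mem_iInter₂.mp hy S ?_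
  · refine convexHull_min ?_ hP hmem
    rintro v ⟨⟨j, hjW⟩, hjS, rfl⟩
    have hjT : j ∈ T := by
      have := Finset.mem_coe.mp hjS
      simpa [hS] using this
    exact (Finset.mem_filter.mp (hTsub hjT)).2
  · simp only [Set.mem_setOf_eq, Fintype.card_coe, hW, hScard]
    have : (d + 1) * F = d * F + F := by ring
    omega

theorem stmt5 (d F : ℕ) (hd : 1 ≤ d) {ι : Type*} [Fintype ι] [DecidableEq ι]
    (hcard : (d + 1) * F + 1 ≤ Fintype.card ι)
    (x : ι → (Fin d → ℝ)) (p : Fin d)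
    (Y Z : Finset ι)
    (hYcard : Y.card = (d + 1) * F + 1) (hZcard : Z.card = (d + 1) * F + 1)
    (hY : ∀ a ∈ Y, ∀ b : ι, b ∉ Y → x a p ≤ x b p)
    (hZ : ∀ a ∈ Z, ∀ b : ι, b ∉ Z → x b p ≤ x a p) :
    (∀ c : ℝ,
      d * F + 1 ≤ (Finset.univ.filter (fun j : ι => x j p ≤ c)).card →
      ∀ y ∈ Psi (fun j : Y => x j) F, y p ≤ c) ∧
    (∀ C : ℝ,
      d * F + 1 ≤ (Finset.univ.filter (fun j : ι => C ≤ x j p)).card →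
      ∀ z ∈ Psi (fun j : Z => x j) F, C ≤ z p) := by
  classical
  have hmul : (d + 1) * F = d * F + F := by ring
  constructor
  · intro c hc
    refine psi_aux x Y hYcard (fun v => v p ≤ c)
      (convex_halfSpace_le ⟨fun _ _ => rfl, fun _ _ => rfl⟩ c) ?_
    by_cases h : ∀ j : ι, x j p ≤ c → j ∈ Y
    · calc d * F + 1 ≤ (Finset.univ.filter (fun j : ι => x j p ≤ c)).card := hc
        _ ≤ (Y.filter (fun j => x j p ≤ c)).card := by
            apply Finset.card_le_card
            intro j hj
            have hj' := (Finset.mem_filter.mp hj).2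
            exact Finset.mem_filter.mpr ⟨h j hj', hj'⟩
    · push_neg at h
      obtain ⟨b, hbc, hbY⟩ := h
      have : Y.filter (fun j => x j p ≤ c) = Y := by
        apply Finset.filter_true_of_mem
        intro a ha
        exact le_trans (hY a ha b hbY) hbc
      rw [this, hYcard]
      omega
  · intro C hC
    refine psi_aux x Z hZcard (fun v => C ≤ v p)
      (convex_halfSpace_ge ⟨fun _ _ => rfl, fun _ _ => rfl⟩ C) ?_
    by_cases h : ∀ j : ι, C ≤ x j p → j ∈ Z
    · calc d * F + 1 ≤ (Finset.univ.filter (fun j : ι => C ≤ x j p)).card := hC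
        _ ≤ (Z.filter (fun j => C ≤ x j p)).card := by
            apply Finset.card_le_card
            intro j hj
            have hj' := (Finset.mem_filter.mp hj).2
            exact Finset.mem_filter.mpr ⟨h j hj', hj'⟩
    · push_neg at h
      obtain ⟨b, hbC, hbZ⟩ := h
      have : Z.filter (fun j => C ≤ x j p) = Z := by
        apply Finset.filter_true_of_mem
        intro a ha
        exact le_trans hbC (hZ a ha b hbZ)
      rw [this, hZcard]
      omega
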